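/- If a family I of subsets of ω is closed under taking subsets and is an Fσ subset of 2^ω, then I can be written as a countable increasing union of closed subsets of 2^ω each of which is closed under taking subsets. -/
import Mathlib


/-- `I ⊆ 2^ω` is closed under taking subsets. -/
def SubsetClosed (I : Set (ℕ → Bool)) : Prop :=
  ∀ X Y : ℕ → Bool, (∀ n, X n = true → Y n = true) → Y ∈ I → X ∈ I

/-- Downward closure of a family. -/
def down (S : Set (ℕ → Bool)) : Set (ℕ → Bool) :=
  {X | ∃ Y ∈ S, ∀ m, X m = true → Y m = true}

lemma down_eq_image (S : Set (ℕ → Bool)) :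
    down S = (fun p : (ℕ → Bool) × (ℕ → Bool) => fun m => p.1 m && p.2 m) ''
      (Set.univ ×ˢ S) := by
  ext X
  constructor
  · rintro ⟨Y, hY, h⟩
    refine ⟨(X, Y), ⟨trivial, hY⟩, ?_⟩
    funext m
    cases hx : X m
    · simp [hx]
    · simp [hx, h m hx]
  · rintro ⟨⟨A, Y⟩, ⟨-, hY⟩, rfl⟩
    exact ⟨Y, hY, fun m h => ((Bool.and_eq_true _ _).mp h).2⟩

lemma down_isClosed {S : Set (ℕ → Bool)} (hS : IsCompact S) : IsClosed (down S) := by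
  rw [down_eq_image]
  have hcont : Continuous (fun p : (ℕ → Bool) × (ℕ → Bool) => fun m => p.1 m && p.2 m) := by
    refine continuous_pi fun m => ?_
    have h1 : Continuous fun p : (ℕ → Bool) × (ℕ → Bool) => (p.1 m, p.2 m) :=
      ((continuous_apply m).comp continuous_fst).prodMk
        ((continuous_apply m).comp continuous_snd)
    exact (continuous_of_discreteTopology (f := fun q : Bool × Bool => q.1 && q.2)).comp h1
  exact ((isCompact_univ.prod hS).image hcont).isClosed

lemma down_subsetClosed (S : Set (ℕ → Bool)) : SubsetClosed (down S) := by
  rintro X Y hXY ⟨Z, hZ, hYZ⟩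
  exact ⟨Z, hZ, fun m hm => hYZ m (hXY m hm)⟩

/-- An `Fσ` subset-closed family of subsets of ω is a countable increasing union of
closed subset-closed sets. -/
theorem fsigma_subsetClosed_decomposition (I : Set (ℕ → Bool))
    (hI : SubsetClosed I)
    (hFσ : ∃ f : ℕ → Set (ℕ → Bool), (∀ n, IsClosed (f n)) ∧ I = ⋃ n, f n) :
    ∃ g : ℕ → Set (ℕ → Bool), Monotone g ∧ (∀ n, IsClosed (g n)) ∧
      (∀ n, SubsetClosed (g n)) ∧ I = ⋃ n, g n := by
  obtain ⟨f, hfc, hfI⟩ := hFσ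
  refine ⟨fun n => down (⋃ k ∈ Finset.range (n + 1), f k), ?_, ?_, ?_, ?_⟩
  · intro a b hab X hX
    obtain ⟨Y, hY, hXY⟩ := hX
    refine ⟨Y, ?_, hXY⟩
    simp only [Set.mem_iUnion, Finset.mem_range] at hY ⊢
    obtain ⟨k, hk, hYk⟩ := hY
    exact ⟨k, lt_of_lt_of_le hk (by omega), hYk⟩
  · intro n
    refine down_isClosed ?_
    have hcl : IsClosed (⋃ k ∈ Finset.range (n + 1), f k) :=
      isClosed_biUnion_finset fun k _ => hfc k
    exact hcl.isCompact
  · intro n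
    exact down_subsetClosed _
  · ext X
    constructor
    · intro hX
      have : X ∈ ⋃ n, f n := hfI ▸ hX
      obtain ⟨_, ⟨n, rfl⟩, hXn⟩ := this
      refine Set.mem_iUnion.mpr ⟨n, X, ?_, fun m hm => hm⟩
      simp only [Set.mem_iUnion, Finset.mem_range]
      exact ⟨n, Nat.lt_succ_self n, hXn⟩
    · intro hX
      obtain ⟨n, Y, hY, hXY⟩ := Set.mem_iUnion.mp hX
      simp only [Set.mem_iUnion, Finset.mem_range] at hY
      obtain ⟨k, -, hYk⟩ := hY
      have hYI : Y ∈ I := hfI ▸ Set.mem_iUnion.mpr ⟨k, hYk⟩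
      exact hI X Y hXY hYI
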